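/- Let Y be the circle ℝ/ℤ and let M denote the set of Borel probability measures η on Y × Y whose two marginals are equal to each other and are good (nonatomic with full support), equipped with the subspace weak-* topology inside the space of all Borel probability measures on Y × Y. Then the set of graph joinings — those η ∈ M for which there exists a Borel measurable map R : Y → Y preserving the common marginal μ of η with η(A × B) = μ(A ∩ R⁻¹(B)) for all Borel A, B — is a Gδ subset of M (in the subspace topology). -/

import Mathlib

open MeasureTheory

noncomputable section

/-- A Borel probability measure on the circle is *good* if it is nonatomic and has
full support. -/
def IsGoodMeasure (ν : Measure (AddCircle (1 : ℝ))) : Prop :=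
  (∀ y : AddCircle (1 : ℝ), ν {y} = 0) ∧
    ∀ V : Set (AddCircle (1 : ℝ)), IsOpen V → V.Nonempty → 0 < ν V

/-- The space `M` of Borel probability measures on `Y × Y` (with the weak-* topology) whose
two marginals are equal to each other and good. -/
def SelfJoiningSpace : Type :=
  {η : ProbabilityMeasure (AddCircle (1 : ℝ) × AddCircle (1 : ℝ)) //
    η.toMeasure.map Prod.fst = η.toMeasure.map Prod.snd ∧
    IsGoodMeasure (η.toMeasure.map Prod.fst)}

instance : TopologicalSpace SelfJoiningSpace :=
  instTopologicalSpaceSubtype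

/-- `η` (with common good marginal `μ`) is a *graph joining* if there is a Borel
`μ`-preserving map `R : Y → Y` such that `η(A × B) = μ(A ∩ R⁻¹(B))` for all Borel `A, B`. -/
def IsGraphJoining (η : SelfJoiningSpace) : Prop :=
  ∃ R : AddCircle (1 : ℝ) → AddCircle (1 : ℝ), Measurable R ∧
    (∀ B : Set (AddCircle (1 : ℝ)), MeasurableSet B →
      (η.1.toMeasure.map Prod.fst) (R ⁻¹' B) = (η.1.toMeasure.map Prod.fst) B) ∧
    ∀ A B : Set (AddCircle (1 : ℝ)), MeasurableSet A → MeasurableSet B →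
      η.1.toMeasure (A ×ˢ B) = (η.1.toMeasure.map Prod.fst) (A ∩ R ⁻¹' B)

open Filter Topology BoundedContinuousFunction

abbrev Y := AddCircle (1 : ℝ)

instance : Fact ((0:ℝ) < 1) := ⟨one_pos⟩

def e : Y → ℂ := fun y => (AddCircle.toCircle y : ℂ)

lemma continuous_e : Continuous e :=
  continuous_induced_dom.comp AddCircle.continuous_toCircle

lemma injective_e : Function.Injective e :=
  Circle.coe_injective.comp (AddCircle.injective_toCircle one_ne_zero)

lemma norm_e (y : Y) : ‖e y‖ = 1 := Circle.norm_coe _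

lemma measurable_e : Measurable e := continuous_e.measurable

-- closed embedding, measurable embedding
lemma closedEmbedding_e : IsClosedEmbedding e :=
  continuous_e.isClosedEmbedding injective_e

lemma measurableEmbedding_e : MeasurableEmbedding e :=
  closedEmbedding_e.measurableEmbedding

def ψ : ℂ → Y := Function.invFun e

lemma ψ_e (y : Y) : ψ (e y) = y := Function.leftInverse_invFun injective_e y

lemma zero_not_range_e : (0:ℂ) ∉ Set.range e := by
  rintro ⟨y, hy⟩
  have := norm_e y
  rw [hy] at this
  simp at this

lemma ψ_const {z z' : ℂ} (hz : z ∉ Set.range e) (hz' : z' ∉ Set.range e) : ψ z = ψ z' := by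
  have h1 : ¬∃ y, e y = z := by simpa [Set.range, eq_comm] using hz
  have h2 : ¬∃ y, e y = z' := by simpa [Set.range, eq_comm] using hz'
  exact (Function.invFun_neg h1).trans (Function.invFun_neg h2).symm

lemma measurable_ψ : Measurable ψ := by
  classical
  intro B hB
  have : ψ ⁻¹' B = (e '' B) ∪ ((Set.range e)ᶜ ∩ ψ ⁻¹' B) := by
    ext z
    constructor
    · intro hz
      by_cases hr : z ∈ Set.range e
      · obtain ⟨y, rfl⟩ := hr
        exact Or.inl ⟨y, by simpa [ψ_e] using hz, rfl⟩
      · exact Or.inr ⟨hr, hz⟩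
    · rintro (⟨y, hy, rfl⟩ | ⟨-, hz⟩)
      · simpa [ψ_e] using hy
      · exact hz
  rw [this]
  have h1 : MeasurableSet (e '' B) := measurableEmbedding_e.measurableSet_image.2 hB
  have h2 : MeasurableSet ((Set.range e)ᶜ ∩ ψ ⁻¹' B) := by
    by_cases hc : ψ 0 ∈ B
    · have : (Set.range e)ᶜ ∩ ψ ⁻¹' B = (Set.range e)ᶜ := by
        ext z
        simp only [Set.mem_inter_iff, Set.mem_compl_iff, Set.mem_preimage, and_iff_left_iff_imp]
        intro hz
        rwa [ψ_const hz zero_not_range_e]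
      rw [this]
      exact (closedEmbedding_e.isClosed_range.measurableSet).compl
    · have : (Set.range e)ᶜ ∩ ψ ⁻¹' B = ∅ := by
        ext z
        simp only [Set.mem_inter_iff, Set.mem_compl_iff, Set.mem_preimage, Set.mem_empty_iff_false,
          iff_false, not_and]
        intro hz hzB
        exact hc (by rwa [ψ_const zero_not_range_e hz])
      rw [this]
      exact MeasurableSet.empty
  exact h1.union h2

def Φ (g : Y →ᵇ ℂ) : (Y × Y) →ᵇ NNReal :=
  BoundedContinuousFunction.mkOfCompact
    ⟨fun p => ‖e p.2 - g p.1‖₊, by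
      exact (continuous_e.comp continuous_snd |>.sub
        (g.continuous.comp continuous_fst)).nnnorm⟩

@[simp] lemma Φ_apply (g : Y →ᵇ ℂ) (p : Y × Y) : Φ g p = ‖e p.2 - g p.1‖₊ := rfl

lemma continuous_lintegral_bcf (f : (Y × Y) →ᵇ NNReal) :
    Continuous fun η : ProbabilityMeasure (Y × Y) => ∫⁻ p, (f p : ENNReal) ∂η.toMeasure := by
  rw [continuous_iff_continuousAt]
  intro η
  exact ProbabilityMeasure.tendsto_iff_forall_lintegral_tendsto.mp tendsto_id f

def V (k : ℕ) : Set (ProbabilityMeasure (Y × Y)) :=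
  {η | ∃ g : Y →ᵇ ℂ,
    ∫⁻ p, (‖e p.2 - g p.1‖₊ : ENNReal) ∂η.toMeasure < (2 : ENNReal)⁻¹ ^ k}

lemma isOpen_V (k : ℕ) : IsOpen (V k) := by
  have : V k = ⋃ g : Y →ᵇ ℂ,
      (fun η : ProbabilityMeasure (Y × Y) => ∫⁻ p, (Φ g p : ENNReal) ∂η.toMeasure) ⁻¹'
        (Set.Iio ((2 : ENNReal)⁻¹ ^ k)) := by
    ext η; simp [V, Set.mem_iUnion, Set.mem_preimage]
  rw [this]
  exact isOpen_iUnion fun g => (isOpen_Iio).preimage (continuous_lintegral_bcf (Φ g))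

lemma forward (η : SelfJoiningSpace) (h : IsGraphJoining η) (k : ℕ) : η.1 ∈ V k := by
  obtain ⟨R, hR, _, h_rect⟩ := h
  set μ := η.1.toMeasure.map Prod.fst with hμ
  haveI : IsProbabilityMeasure μ := Measure.isProbabilityMeasure_map measurable_fst.aemeasurable
  have hgr : Measurable fun x : Y => (x, R x) := measurable_id.prodMk hR
  have hkey : η.1.toMeasure = μ.map (fun x => (x, R x)) := by
    refine MeasureTheory.ext_of_generate_finite _ generateFrom_prod.symm isPiSystem_prod ?_ ?_
    · rintro s ⟨A, hA, B, hB, rfl⟩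
      rw [Measure.map_apply hgr ((show MeasurableSet A from hA).prod (show MeasurableSet B from hB))]
      have hpre : (fun x : Y => (x, R x)) ⁻¹' (A ×ˢ B) = A ∩ R ⁻¹' B := by
        ext x; simp [Set.mem_prod]
      rw [hpre, ← h_rect A B hA hB]
    · haveI : IsProbabilityMeasure (μ.map (fun x => (x, R x))) :=
        Measure.isProbabilityMeasure_map hgr.aemeasurable
      simp [measure_univ]
  have hInt : Integrable (fun x => e (R x)) μ := by
    refine Integrable.mono' (integrable_const 1) ((measurable_e.comp hR).aestronglyMeasurable) ?_
    filter_upwards with x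
    exact le_of_eq (norm_e (R x))
  have hεpos : ((2 : ENNReal)⁻¹ ^ k) / 2 ≠ 0 := by
    simp [ENNReal.div_eq_top, pow_ne_zero, ENNReal.inv_ne_zero]
  obtain ⟨g, hg, -⟩ := hInt.exists_boundedContinuous_lintegral_sub_le hεpos
  refine ⟨g, ?_⟩
  have hmeas : Measurable fun p : Y × Y => (‖e p.2 - g p.1‖₊ : ENNReal) :=
    ((measurable_e.comp measurable_snd).sub
      (g.continuous.measurable.comp measurable_fst)).nnnorm.coe_nnreal_ennreal
  rw [hkey, lintegral_map hmeas hgr]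
  calc ∫⁻ x, (‖e (R x) - g x‖₊ : ENNReal) ∂μ ≤ ((2 : ENNReal)⁻¹ ^ k) / 2 := hg
    _ < (2 : ENNReal)⁻¹ ^ k :=
      ENNReal.half_lt_self (by simp [pow_ne_zero, ENNReal.inv_ne_zero])
        (by simp [ENNReal.pow_ne_top])

lemma backward (η : SelfJoiningSpace) (h : ∀ k, η.1 ∈ V k) : IsGraphJoining η := by
  choose g hg using h
  set ν := η.1.toMeasure with hν
  set μ := ν.map Prod.fst with hμ
  -- a.e. convergence of g k p.1 to e p.2
  have hFm : ∀ k, Measurable fun p : Y × Y => (‖e p.2 - g k p.1‖₊ : ENNReal) := fun k =>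
    ((measurable_e.comp measurable_snd).sub
      ((g k).continuous.measurable.comp measurable_fst)).nnnorm.coe_nnreal_ennreal
  have hsum : ∫⁻ p, ∑' k, (‖e p.2 - g k p.1‖₊ : ENNReal) ∂ν ≠ ⊤ := by
    rw [lintegral_tsum fun k => (hFm k).aemeasurable]
    refine ne_top_of_le_ne_top ?_ (ENNReal.tsum_le_tsum fun k => (hg k).le)
    rw [ENNReal.tsum_geometric, ENNReal.one_sub_inv_two, inv_inv]
    exact ENNReal.ofNat_ne_top
  have hae : ∀ᵐ p ∂ν, Tendsto (fun k => g k p.1) atTop (𝓝 (e p.2)) := by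
    have h1 : ∀ᵐ p ∂ν, ∑' k, (‖e p.2 - g k p.1‖₊ : ENNReal) ≠ ⊤ :=
      (ae_lt_top (Measurable.ennreal_tsum hFm) hsum).mono fun p hp => hp.ne
    filter_upwards [h1] with p hp
    have h2 : Tendsto (fun k => (‖e p.2 - g k p.1‖₊ : ENNReal)) atTop (𝓝 0) :=
      ENNReal.tendsto_atTop_zero_of_tsum_ne_top hp
    have h3 : Tendsto (fun k => ‖g k p.1 - e p.2‖) atTop (𝓝 0) := by
      rw [← ENNReal.coe_zero] at h2
      have := ENNReal.tendsto_coe.mp h2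
      have h4 : Tendsto (fun k => ((‖e p.2 - g k p.1‖₊ : NNReal) : ℝ)) atTop
          (𝓝 ((0 : NNReal) : ℝ)) := NNReal.tendsto_coe.mpr this
      simpa [norm_sub_rev] using h4
    exact tendsto_iff_norm_sub_tendsto_zero.mpr h3
  -- the set where the g k converge
  have hCm : MeasurableSet {x : Y | ∃ c : ℂ, Tendsto (fun k => g k x) atTop (𝓝 c)} :=
    measurableSet_exists_tendsto fun k => (g k).continuous.measurable
  have hμD : ∀ᵐ x ∂μ, ∃ c : ℂ, Tendsto (fun k => g k x) atTop (𝓝 c) := by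
    rw [ae_iff]
    have hset : {a : Y | ¬∃ c : ℂ, Tendsto (fun k => g k a) atTop (𝓝 c)} =
        {x : Y | ∃ c : ℂ, Tendsto (fun k => g k x) atTop (𝓝 c)}ᶜ := rfl
    rw [hset, hμ, Measure.map_apply measurable_fst hCm.compl]
    refine measure_mono_null ?_ (ae_iff.mp hae)
    intro p hp
    simp only [Set.mem_preimage, Set.mem_compl_iff, Set.mem_setOf_eq] at hp ⊢
    exact fun hT => hp ⟨e p.2, hT⟩
  obtain ⟨hfun, hhm, hh⟩ := measurable_limit_of_tendsto_metrizable_ae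
    (fun k => ((g k).continuous.measurable).aemeasurable) hμD
  -- lift hh to ν
  obtain ⟨T, hTsub, hTm, hT0⟩ := exists_measurable_superset_of_null (ae_iff.mp hh)
  have hνT : ∀ᵐ p ∂ν, p.1 ∉ T := by
    rw [ae_iff]
    have : {p : Y × Y | ¬ p.1 ∉ T} = Prod.fst ⁻¹' T := by ext p; simp
    rw [this, ← Measure.map_apply measurable_fst hTm, ← hμ, hT0]
  have haeq : ∀ᵐ p ∂ν, e p.2 = hfun p.1 := by
    filter_upwards [hae, hνT] with p h1 h2
    have h3 : Tendsto (fun k => g k p.1) atTop (𝓝 (hfun p.1)) := by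
      by_contra hcon
      exact h2 (hTsub hcon)
    exact tendsto_nhds_unique h1 h3
  -- define R
  have hRm : Measurable (fun x => ψ (hfun x)) := measurable_ψ.comp hhm
  refine ⟨fun x => ψ (hfun x), hRm, ?_, ?_⟩
  · intro B hB
    have heq : (Prod.fst ⁻¹' ((fun x => ψ (hfun x)) ⁻¹' B) : Set (Y × Y)) =ᵐ[ν]
        (Prod.snd ⁻¹' B : Set (Y × Y)) := by
      rw [Filter.eventuallyEq_set]
      filter_upwards [haeq] with p hp
      simp only [Set.mem_preimage]
      rw [← hp, ψ_e]
    rw [Measure.map_apply measurable_fst (hRm hB),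
      Measure.map_apply measurable_fst hB]
    calc ν (Prod.fst ⁻¹' ((fun x => ψ (hfun x)) ⁻¹' B)) = ν (Prod.snd ⁻¹' B) :=
          measure_congr heq
      _ = ν (Prod.fst ⁻¹' B) := by
          rw [← Measure.map_apply measurable_snd hB, ← Measure.map_apply measurable_fst hB,
            η.2.1]
  · intro A B hA hB
    have heq : (A ×ˢ B : Set (Y × Y)) =ᵐ[ν]
        (Prod.fst ⁻¹' (A ∩ (fun x => ψ (hfun x)) ⁻¹' B) : Set (Y × Y)) := by
      rw [Filter.eventuallyEq_set]
      filter_upwards [haeq] with p hp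
      simp only [Set.mem_prod, Set.mem_preimage, Set.mem_inter_iff]
      rw [← hp, ψ_e]
    rw [Measure.map_apply measurable_fst (hA.inter (hRm hB))]
    exact measure_congr heq

/-- In the space `M` of probability measures on `Y × Y` with equal good marginals
(weak-* subspace topology), the graph joinings form a `Gδ` subset. -/
theorem graph_joinings_Gδ : IsGδ {η : SelfJoiningSpace | IsGraphJoining η} := by
  have hset : {η : SelfJoiningSpace | IsGraphJoining η} =
      ⋂ k : ℕ, (fun η : SelfJoiningSpace => η.1) ⁻¹' (V k) := by
    ext η
    simp only [Set.mem_setOf_eq, Set.mem_iInter, Set.mem_preimage]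
    exact ⟨fun h k => forward η h k, backward η⟩
  rw [hset]
  exact .iInter fun k => ((isOpen_V k).preimage continuous_subtype_val).isGδ
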